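/- Let E be a real vector space, C ⊆ E a nonempty convex set, and f, g : C → ℝ affine functions (f(β·x + (1−β)·y) = β·f(x) + (1−β)·f(y) for all x, y ∈ C and β ∈ [0,1], similarly for g). Suppose that for all x, y ∈ C, f(x) > f(y) if and only if g(x) > g(y). Then there exist a > 0 and b ∈ ℝ such that f(x) = a·g(x) + b for all x ∈ C. -/
import Mathlib


/-- **Ordinal equivalence of affine functionals.** If two affine real-valued functions
on a nonempty convex subset `C` of a real vector space induce the same strict ordering,
then one is a positive affine transformation of the other. -/
theorem affine_ordinal_equiv_positive_affine
    {E : Type*} [AddCommGroup E] [Module ℝ E] {C : Set E}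
    (hne : C.Nonempty) (hconv : Convex ℝ C) (f g : E → ℝ)
    (hf : ∀ x ∈ C, ∀ y ∈ C, ∀ β : ℝ, 0 ≤ β → β ≤ 1 →
        f (β • x + (1 - β) • y) = β * f x + (1 - β) * f y)
    (hg : ∀ x ∈ C, ∀ y ∈ C, ∀ β : ℝ, 0 ≤ β → β ≤ 1 →
        g (β • x + (1 - β) • y) = β * g x + (1 - β) * g y)
    (horder : ∀ x ∈ C, ∀ y ∈ C, (f x > f y ↔ g x > g y)) :
    ∃ (a b : ℝ), 0 < a ∧ ∀ x ∈ C, f x = a * g x + b := by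
  -- equal g-values give equal f-values
  have heq : ∀ p ∈ C, ∀ q ∈ C, g p = g q → f p = f q := by
    intro p hp q hq h
    by_contra hne'
    rcases lt_or_gt_of_ne hne' with hlt | hgt
    · exact absurd ((horder q hq p hp).mp hlt) (by rw [h]; exact lt_irrefl _)
    · exact absurd ((horder p hp q hq).mp hgt) (by rw [h]; exact lt_irrefl _)
  by_cases hc : ∀ x ∈ C, ∀ y ∈ C, g x = g y
  · -- g constant on C, hence f constant
    obtain ⟨x0, hx0⟩ := hne
    refine ⟨1, f x0 - g x0, one_pos, fun x hx => ?_⟩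
    have hg0 : g x = g x0 := hc x hx x0 hx0
    have hf0 : f x = f x0 := heq x hx x0 hx0 hg0
    rw [hf0, hg0]; ring
  · push_neg at hc
    obtain ⟨p, hp, q, hq, hpq⟩ := hc
    -- choose x0, x1 with g x0 < g x1
    obtain ⟨x0, hx0, x1, hx1, hgt⟩ : ∃ x0 ∈ C, ∃ x1 ∈ C, g x0 < g x1 := by
      rcases lt_or_gt_of_ne hpq with h | h
      · exact ⟨p, hp, q, hq, h⟩
      · exact ⟨q, hq, p, hp, h⟩
    have hΔ : (0 : ℝ) < g x1 - g x0 := by linarith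
    have hΔne : g x1 - g x0 ≠ 0 := ne_of_gt hΔ
    have hf01 : f x0 < f x1 := (horder x1 hx1 x0 hx0).mpr hgt
    obtain ⟨a, haΔ⟩ : ∃ a : ℝ, a * (g x1 - g x0) = f x1 - f x0 :=
      ⟨(f x1 - f x0) / (g x1 - g x0), div_mul_cancel₀ _ hΔne⟩
    have ha : 0 < a := by nlinarith
    refine ⟨a, f x0 - a * g x0, ha, fun z hz => ?_⟩
    obtain ⟨t, htΔ⟩ : ∃ t : ℝ, g z - g x0 = t * (g x1 - g x0) :=
      ⟨(g z - g x0) / (g x1 - g x0), (div_mul_cancel₀ _ hΔne).symm⟩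
    -- key: f z = f x0 + t * (f x1 - f x0)
    have key : f z = f x0 + t * (f x1 - f x0) := by
      rcases lt_or_ge t 0 with ht | ht
      · -- t < 0 : mix x1 and z to hit g x0
        have ht1 : t - 1 < 0 := by linarith
        obtain ⟨β, hβt⟩ : ∃ β : ℝ, β * (t - 1) = t :=
          ⟨t / (t - 1), div_mul_cancel₀ _ (ne_of_lt ht1)⟩
        have hβ0 : 0 < β := by nlinarith
        have hβ1 : β ≤ 1 := by nlinarith
        have hw : β • x1 + (1 - β) • z ∈ C := hconv hx1 hz hβ0.le (by linarith) (by ring)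
        have hgw : g (β • x1 + (1 - β) • z) = β * g x1 + (1 - β) * g z :=
          hg x1 hx1 z hz β hβ0.le hβ1
        have hgwx0 : g (β • x1 + (1 - β) • z) = g x0 := by
          linear_combination hgw + (1 - β) * htΔ - (g x1 - g x0) * hβt
        have hfw : f (β • x1 + (1 - β) • z) = β * f x1 + (1 - β) * f z :=
          hf x1 hx1 z hz β hβ0.le hβ1
        have hfwx0 : f (β • x1 + (1 - β) • z) = f x0 :=
          heq _ hw x0 hx0 hgwx0
        have hfz : β * f x1 + (1 - β) * f z = f x0 := by rw [← hfw, hfwx0]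
        linear_combination (1 - t) * hfz + (f x1 - f z) * hβt
      · rcases le_or_gt t 1 with ht1 | ht1
        · -- 0 ≤ t ≤ 1 : mix x1 and x0 to hit g z
          have ht0 : 0 ≤ t := ht
          have hw : t • x1 + (1 - t) • x0 ∈ C := hconv hx1 hx0 ht0 (by linarith) (by ring)
          have hgw : g (t • x1 + (1 - t) • x0) = t * g x1 + (1 - t) * g x0 :=
            hg x1 hx1 x0 hx0 t ht0 ht1
          have hgwz : g (t • x1 + (1 - t) • x0) = g z := by
            linear_combination hgw - htΔ
          have hfw : f (t • x1 + (1 - t) • x0) = t * f x1 + (1 - t) * f x0 :=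
            hf x1 hx1 x0 hx0 t ht0 ht1
          have hfwz : f (t • x1 + (1 - t) • x0) = f z := heq _ hw z hz hgwz
          linear_combination hfw - hfwz
        · -- t > 1 : mix z and x0 to hit g x1
          have ht0 : (0 : ℝ) < t := by linarith
          obtain ⟨s, h1t⟩ : ∃ s : ℝ, s * t = 1 := ⟨1 / t, by field_simp⟩
          have hs0 : 0 < s := by nlinarith
          have hs1 : s ≤ 1 := by nlinarith
          have hw : s • z + (1 - s) • x0 ∈ C := hconv hz hx0 hs0.le (by linarith) (by ring)
          have hgw : g (s • z + (1 - s) • x0) = s * g z + (1 - s) * g x0 :=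
            hg z hz x0 hx0 s hs0.le hs1
          have hgwx1 : g (s • z + (1 - s) • x0) = g x1 := by
            linear_combination hgw + s * htΔ + (g x1 - g x0) * h1t
          have hfw : f (s • z + (1 - s) • x0) = s * f z + (1 - s) * f x0 :=
            hf z hz x0 hx0 s hs0.le hs1
          have hfwx1 : f (s • z + (1 - s) • x0) = f x1 := heq _ hw x1 hx1 hgwx1
          have hfz : s * f z + (1 - s) * f x0 = f x1 := by rw [← hfw, hfwx1]
          linear_combination t * hfz - (f z - f x0) * h1t
    linear_combination key - a * htΔ - t * haΔ
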